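/- arXiv:1710.07282 — 2 statements merged into one kernel-verified Lean document; each statement's English description precedes it below -/
import Mathlib

section
/- If the random variables (Xᵢ)_{i=1}^M are i.i.d. in L^{2p}(Ω, V) and (X̄ᵢ)_{i=1}^M are i.i.d. in L^{2p}(Ω, V), then the sample covariances satisfy ‖Cov_M[X] − Cov_M[X̄]‖_{L^p(Ω, V⊗V)} ≤ 4 ‖X₁ − X̄₁‖_{L^{2p}(Ω,V)} (‖X₁‖_{L^{2p}(Ω,V)} + ‖X̄₁‖_{L^{2p}(Ω,V)}) · (M/(M−1)), where X̄ᵢ is coupled to Xᵢ on the same probability space. -/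
open MeasureTheory ProbabilityTheory
open scoped InnerProductSpace ENNReal

/-- Rank-one tensor `x ⊗ y`, realized as the operator `z ↦ ⟪y, z⟫ x`. -/
noncomputable def outerTensor {V : Type*} [NormedAddCommGroup V]
    [InnerProductSpace ℝ V] (x y : V) : V →L[ℝ] V :=
  (innerSL ℝ y).smulRight x

/-- Hilbert–Schmidt norm of `A : V → V` with respect to a Hilbert basis `b` of `V`. -/
noncomputable def hsNorm {ι V : Type*} [NormedAddCommGroup V]
    [InnerProductSpace ℝ V] (b : HilbertBasis ι ℝ V) (A : V →L[ℝ] V) : ℝ :=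
  Real.sqrt (∑' i, ‖A (b i)‖ ^ 2)

/-- Unbiased sample covariance `Cov_M[X] = (M/(M−1))(E_M[X ⊗ X] − E_M[X] ⊗ E_M[X])`
of an ensemble `X : Fin M → Ω → V`, evaluated at `ω`. -/
noncomputable def sampleCov {Ω V : Type*} [NormedAddCommGroup V]
    [InnerProductSpace ℝ V] {M : ℕ} (X : Fin M → Ω → V) (ω : Ω) : V →L[ℝ] V :=
  ((M : ℝ) / ((M : ℝ) - 1)) •
    ((M : ℝ)⁻¹ • ∑ i, outerTensor (X i ω) (X i ω)
      - outerTensor ((M : ℝ)⁻¹ • ∑ i, X i ω) ((M : ℝ)⁻¹ • ∑ i, X i ω))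

section aux
variable {ι V : Type*} [NormedAddCommGroup V] [InnerProductSpace ℝ V]
  (b : HilbertBasis ι ℝ V)

lemma hsNorm_nonneg {ι V : Type*} [NormedAddCommGroup V] [InnerProductSpace ℝ V]
    (b : HilbertBasis ι ℝ V) (A : V →L[ℝ] V) : 0 ≤ hsNorm b A := Real.sqrt_nonneg _

lemma outerTensor_apply (x y z : V) : outerTensor x y z = ⟪y, z⟫_ℝ • x := rfl

lemma memℓp_outerTensor (x y : V) :
    Memℓp (fun i => outerTensor x y (b i)) 2 := by
  apply memℓp_gen
  have h2 : ((2 : ℝ≥0∞)).toReal = ((2 : ℕ) : ℝ) := by simp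
  have hsum : Summable fun i => ⟪y, b i⟫_ℝ * ⟪b i, y⟫_ℝ :=
    (b.hasSum_inner_mul_inner y y).summable
  have : Summable fun i => (⟪y, b i⟫_ℝ * ⟪b i, y⟫_ℝ) * ‖x‖ ^ 2 := hsum.mul_right _
  apply this.congr
  intro i
  rw [h2, Real.rpow_natCast]
  rw [outerTensor_apply, norm_smul]
  rw [Real.norm_eq_abs, mul_pow, sq_abs, real_inner_comm (b i) y]
  ring

noncomputable def otEl (x y : V) : lp (fun _ : ι => V) 2 :=
  ⟨fun i => outerTensor x y (b i), memℓp_outerTensor b x y⟩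

@[simp] lemma otEl_apply (x y : V) (i : ι) : (otEl b x y : ∀ _ : ι, V) i = ⟪y, b i⟫_ℝ • x := rfl

lemma hsNorm_eq_norm (A : V →L[ℝ] V) (g : lp (fun _ : ι => V) 2)
    (h : ∀ i, A (b i) = g i) : hsNorm b A = ‖g‖ := by
  rw [lp.norm_eq_tsum_rpow (by norm_num) g]
  have h2 : ((2 : ℝ≥0∞)).toReal = ((2 : ℕ) : ℝ) := by simp
  rw [hsNorm]
  have : ∀ i, ‖g i‖ ^ ((2:ℝ≥0∞)).toReal = ‖A (b i)‖ ^ (2:ℕ) := by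
    intro i; rw [h2, Real.rpow_natCast, h]
  rw [tsum_congr this, Real.sqrt_eq_rpow, h2]
  norm_num

lemma norm_otEl (x y : V) : ‖otEl b x y‖ = ‖x‖ * ‖y‖ := by
  rw [← hsNorm_eq_norm b (outerTensor x y) (otEl b x y) (fun i => rfl)]
  rw [hsNorm]
  have : ∀ i, ‖outerTensor x y (b i)‖ ^ 2 = (⟪y, b i⟫_ℝ * ⟪b i, y⟫_ℝ) * ‖x‖ ^ 2 := by
    intro i
    rw [outerTensor_apply, norm_smul]
    rw [Real.norm_eq_abs, mul_pow, sq_abs, real_inner_comm (b i) y]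
    ring
  rw [tsum_congr this, tsum_mul_right, (b.hasSum_inner_mul_inner y y).tsum_eq,
    real_inner_self_eq_norm_sq]
  rw [show ‖y‖ ^ 2 * ‖x‖ ^ 2 = (‖x‖ * ‖y‖) ^ 2 by ring, Real.sqrt_sq (by positivity)]

lemma otEl_sq_sub (x y : V) :
    otEl b x x - otEl b y y = otEl b (x - y) x + otEl b y (x - y) := by
  apply lp.ext
  rw [lp.coeFn_sub, lp.coeFn_add]
  funext i
  simp only [Pi.sub_apply, Pi.add_apply, otEl_apply, inner_sub_left, sub_smul, smul_sub]
  abel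

lemma norm_otEl_sq_sub (x y : V) :
    ‖otEl b x x - otEl b y y‖ ≤ ‖x - y‖ * (‖x‖ + ‖y‖) := by
  rw [otEl_sq_sub]
  calc ‖otEl b (x - y) x + otEl b y (x - y)‖
      ≤ ‖otEl b (x - y) x‖ + ‖otEl b y (x - y)‖ := norm_add_le _ _
    _ = ‖x - y‖ * ‖x‖ + ‖y‖ * ‖x - y‖ := by rw [norm_otEl, norm_otEl]
    _ = ‖x - y‖ * (‖x‖ + ‖y‖) := by ring

end aux


section ptwise
variable {ι V : Type*} [NormedAddCommGroup V] [InnerProductSpace ℝ V]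
  (b : HilbertBasis ι ℝ V)

lemma pointwise_key {Ω : Type*} {M : ℕ} (hM : 2 ≤ M) (X Xb : Fin M → Ω → V) (ω : Ω) :
    hsNorm b (sampleCov X ω - sampleCov Xb ω) ≤
      ((M:ℝ)/((M:ℝ)-1)) * ((M:ℝ)⁻¹ * ∑ i, ‖X i ω - Xb i ω‖ * (‖X i ω‖ + ‖Xb i ω‖))
        + ((M:ℝ)/((M:ℝ)-1)) * ((M:ℝ)⁻¹ * ((M:ℝ)⁻¹ * ∑ q : Fin M × Fin M,
            ‖X q.1 ω - Xb q.1 ω‖ * (‖X q.2 ω‖ + ‖Xb q.2 ω‖))) := by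
  haveI : Fact (1 ≤ (2:ℝ≥0∞)) := ⟨by norm_num⟩
  have hM1 : (1:ℝ) ≤ (M:ℝ) - 1 := by
    have : (2:ℝ) ≤ (M:ℝ) := by exact_mod_cast hM
    linarith
  set c := (M:ℝ)/((M:ℝ)-1) with hcdef
  set m := (M:ℝ)⁻¹ with hmdef
  have hc : 0 ≤ c := by positivity
  have hm : 0 ≤ m := by positivity
  set mu := (M:ℝ)⁻¹ • ∑ i, X i ω with hmu
  set mv := (M:ℝ)⁻¹ • ∑ i, Xb i ω with hmv
  set Z : lp (fun _ : ι => V) 2 :=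
    c • (m • ∑ i, (otEl b (X i ω) (X i ω) - otEl b (Xb i ω) (Xb i ω))
      - (otEl b mu mu - otEl b mv mv)) with hZdef
  have hZ : hsNorm b (sampleCov X ω - sampleCov Xb ω) = ‖Z‖ := by
    apply hsNorm_eq_norm
    intro j
    simp only [hZdef, lp.coeFn_smul, Pi.smul_apply, lp.coeFn_sub, Pi.sub_apply, lp.coeFn_sum,
      Finset.sum_apply, otEl_apply, sampleCov, ContinuousLinearMap.sub_apply,
      ContinuousLinearMap.smul_apply, ContinuousLinearMap.sum_apply, outerTensor_apply]
    rw [Finset.sum_sub_distrib]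
    module
  rw [hZ, hZdef]
  have hsum1 : ‖∑ i, (otEl b (X i ω) (X i ω) - otEl b (Xb i ω) (Xb i ω))‖
      ≤ ∑ i, ‖X i ω - Xb i ω‖ * (‖X i ω‖ + ‖Xb i ω‖) :=
    (norm_sum_le _ _).trans (Finset.sum_le_sum fun i _ => norm_otEl_sq_sub b _ _)
  have hmuv : ‖mu - mv‖ ≤ m * ∑ i, ‖X i ω - Xb i ω‖ := by
    rw [hmu, hmv, ← smul_sub, ← Finset.sum_sub_distrib, norm_smul,
      Real.norm_eq_abs, abs_of_nonneg hm]
    exact mul_le_mul_of_nonneg_left (norm_sum_le _ _) hm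
  have hmus : ‖mu‖ + ‖mv‖ ≤ m * ∑ i, (‖X i ω‖ + ‖Xb i ω‖) := by
    rw [hmu, hmv, norm_smul, norm_smul, Real.norm_eq_abs, abs_of_nonneg hm,
      Finset.sum_add_distrib, mul_add]
    exact add_le_add (mul_le_mul_of_nonneg_left (norm_sum_le _ _) hm)
      (mul_le_mul_of_nonneg_left (norm_sum_le _ _) hm)
  have h2 : ‖otEl b mu mu - otEl b mv mv‖
      ≤ m * (m * ∑ q : Fin M × Fin M, ‖X q.1 ω - Xb q.1 ω‖ * (‖X q.2 ω‖ + ‖Xb q.2 ω‖)) := by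
    refine (norm_otEl_sq_sub b mu mv).trans ?_
    have := mul_le_mul hmuv hmus (by positivity) (by positivity)
    refine this.trans (le_of_eq ?_)
    have e : (∑ q : Fin M × Fin M, ‖X q.1 ω - Xb q.1 ω‖ * (‖X q.2 ω‖ + ‖Xb q.2 ω‖))
        = (∑ i, ‖X i ω - Xb i ω‖) * (∑ i, (‖X i ω‖ + ‖Xb i ω‖)) := by
      rw [Finset.sum_mul_sum]
      exact Fintype.sum_prod_type _
    rw [e]
    ring
  calc ‖Z‖ = c * ‖m • ∑ i, (otEl b (X i ω) (X i ω) - otEl b (Xb i ω) (Xb i ω))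
        - (otEl b mu mu - otEl b mv mv)‖ := by
        rw [norm_smul, Real.norm_eq_abs, abs_of_nonneg hc]
    _ ≤ c * (m * ∑ i, ‖X i ω - Xb i ω‖ * (‖X i ω‖ + ‖Xb i ω‖)
        + m * (m * ∑ q : Fin M × Fin M, ‖X q.1 ω - Xb q.1 ω‖ * (‖X q.2 ω‖ + ‖Xb q.2 ω‖))) := by
        apply mul_le_mul_of_nonneg_left _ hc
        refine (norm_sub_le _ _).trans (add_le_add ?_ h2)
        rw [norm_smul, Real.norm_eq_abs, abs_of_nonneg hm]
        exact mul_le_mul_of_nonneg_left hsum1 hm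
    _ = _ := by ring

end ptwise


/-- If `(Xᵢ)` and `(X̄ᵢ)` are i.i.d. ensembles in `L^{2p}(Ω,V)` coupled on the same
probability space (the pairs `(Xᵢ, X̄ᵢ)` being i.i.d.), then
`‖Cov_M[X] − Cov_M[X̄]‖_{L^p(Ω,V⊗V)}
  ≤ 4 ‖X₁ − X̄₁‖_{L^{2p}} (‖X₁‖_{L^{2p}} + ‖X̄₁‖_{L^{2p}}) · M/(M−1)`. -/
theorem sample_covariance_ensemble_distance {Ω V ι : Type*} [MeasurableSpace Ω]
    {μ : Measure Ω} [IsProbabilityMeasure μ]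
    [NormedAddCommGroup V] [InnerProductSpace ℝ V] [CompleteSpace V]
    [SecondCountableTopology V] [MeasurableSpace V] [BorelSpace V]
    (b : HilbertBasis ι ℝ V) (p : ℝ) (hp : 2 ≤ p)
    (M : ℕ) (hM : 2 ≤ M) (X Xb : Fin M → Ω → V)
    (hXp : ∀ i, MemLp (X i) (ENNReal.ofReal (2 * p)) μ)
    (hXbp : ∀ i, MemLp (Xb i) (ENNReal.ofReal (2 * p)) μ)
    (hmeas : ∀ i, Measurable fun ω => (X i ω, Xb i ω))
    (hindep : iIndepFun (fun i ω => (X i ω, Xb i ω)) μ)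
    (hid : ∀ i j, IdentDistrib (fun ω => (X i ω, Xb i ω))
      (fun ω => (X j ω, Xb j ω)) μ μ) :
    eLpNorm (fun ω => hsNorm b (sampleCov X ω - sampleCov Xb ω))
        (ENNReal.ofReal p) μ
      ≤ ENNReal.ofReal (4 * (M : ℝ) / ((M : ℝ) - 1)) *
        (eLpNorm (fun ω => X ⟨0, by omega⟩ ω - Xb ⟨0, by omega⟩ ω)
            (ENNReal.ofReal (2 * p)) μ *
          (eLpNorm (X ⟨0, by omega⟩) (ENNReal.ofReal (2 * p)) μ
            + eLpNorm (Xb ⟨0, by omega⟩) (ENNReal.ofReal (2 * p)) μ)) := by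
  have hp0 : 0 < p := lt_of_lt_of_le two_pos hp
  set i0 : Fin M := ⟨0, by omega⟩
  set q : ℝ≥0∞ := ENNReal.ofReal p
  set q2 : ℝ≥0∞ := ENNReal.ofReal (2 * p)
  have h1q : 1 ≤ q := by
    rw [show (1:ℝ≥0∞) = ENNReal.ofReal 1 by simp]
    exact ENNReal.ofReal_le_ofReal (by linarith)
  have h1q2 : 1 ≤ q2 := by
    rw [show (1:ℝ≥0∞) = ENNReal.ofReal 1 by simp]
    exact ENNReal.ofReal_le_ofReal (by linarith)
  have hq : 1 / q = 1 / q2 + 1 / q2 := by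
    rw [one_div, one_div, ← ENNReal.ofReal_inv_of_pos hp0,
      ← ENNReal.ofReal_inv_of_pos (by positivity),
      ← ENNReal.ofReal_add (by positivity) (by positivity)]
    congr 1
    field_simp
    ring
  set d : Fin M → Ω → ℝ := fun i ω => ‖X i ω - Xb i ω‖ with hd
  set s : Fin M → Ω → ℝ := fun i ω => ‖X i ω‖ + ‖Xb i ω‖ with hs
  have hXm : ∀ i, Measurable (X i) := fun i => measurable_fst.comp (hmeas i)
  have hXbm : ∀ i, Measurable (Xb i) := fun i => measurable_snd.comp (hmeas i)
  have hdm : ∀ i, Measurable (d i) := fun i => ((hXm i).sub (hXbm i)).norm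
  have hsm : ∀ i, Measurable (s i) := fun i => (hXm i).norm.add (hXbm i).norm
  set D : ℝ≥0∞ := eLpNorm (fun ω => X i0 ω - Xb i0 ω) q2 μ with hDdef
  set A : ℝ≥0∞ := eLpNorm (X i0) q2 μ with hAdef
  set B : ℝ≥0∞ := eLpNorm (Xb i0) q2 μ with hBdef
  have hD : ∀ i, eLpNorm (d i) q2 μ = D := by
    intro i
    calc eLpNorm (d i) q2 μ = eLpNorm (fun ω => X i ω - Xb i ω) q2 μ :=
          eLpNorm_norm (fun ω => X i ω - Xb i ω)
      _ = D := ((hid i i0).comp (measurable_fst.sub measurable_snd)).eLpNorm_eq q2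
  have hA : ∀ i, eLpNorm (fun ω => ‖X i ω‖) q2 μ = A := by
    intro i
    calc eLpNorm (fun ω => ‖X i ω‖) q2 μ = eLpNorm (X i) q2 μ := eLpNorm_norm (X i)
      _ = A := ((hid i i0).comp measurable_fst).eLpNorm_eq q2
  have hB : ∀ i, eLpNorm (fun ω => ‖Xb i ω‖) q2 μ = B := by
    intro i
    calc eLpNorm (fun ω => ‖Xb i ω‖) q2 μ = eLpNorm (Xb i) q2 μ := eLpNorm_norm (Xb i)
      _ = B := ((hid i i0).comp measurable_snd).eLpNorm_eq q2
  have hS : ∀ i, eLpNorm (s i) q2 μ ≤ A + B := by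
    intro i
    have : s i = (fun ω => ‖X i ω‖) + fun ω => ‖Xb i ω‖ := rfl
    rw [this]
    refine (eLpNorm_add_le ((hXm i).norm.aestronglyMeasurable)
      ((hXbm i).norm.aestronglyMeasurable) h1q2).trans ?_
    rw [hA i, hB i]
  -- Hölder per term
  have hT : ∀ i j, eLpNorm (fun ω => d i ω * s j ω) q μ ≤ D * (A + B) := by
    intro i j
    have h := eLpNorm_smul_le_mul_eLpNorm (μ := μ) (f := s j) (φ := d i)
      ((hsm j).aestronglyMeasurable) ((hdm i).aestronglyMeasurable)
      (hpqr := ⟨by simp only [← one_div]; exact hq.symm⟩)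
    have he : (d i • s j) = fun ω => d i ω * s j ω := rfl
    rw [he] at h
    exact h.trans (mul_le_mul' (le_of_eq (hD i)) (hS j))
  -- the dominating function
  set c : ℝ := (M:ℝ)/((M:ℝ)-1) with hc
  set m : ℝ := (M:ℝ)⁻¹ with hm
  have hM1 : (1:ℝ) ≤ (M:ℝ) - 1 := by
    have : (2:ℝ) ≤ (M:ℝ) := by exact_mod_cast hM
    linarith
  have hc0 : 0 ≤ c := by positivity
  have hm0 : 0 ≤ m := by positivity
  set G1 : Ω → ℝ := fun ω => ∑ i, d i ω * s i ω with hG1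
  set G2 : Ω → ℝ := fun ω => ∑ ij : Fin M × Fin M, d ij.1 ω * s ij.2 ω with hG2
  set F : Ω → ℝ := (c*m) • G1 + (c*m*m) • G2 with hF
  have hG1m : AEStronglyMeasurable G1 μ := by
    refine Measurable.aestronglyMeasurable ?_
    exact Finset.measurable_sum _ fun i _ => (hdm i).mul (hsm i)
  have hG2m : AEStronglyMeasurable G2 μ := by
    refine Measurable.aestronglyMeasurable ?_
    exact Finset.measurable_sum _ fun ij _ => (hdm ij.1).mul (hsm ij.2)
  have hpt : ∀ ω, ‖hsNorm b (sampleCov X ω - sampleCov Xb ω)‖ ≤ F ω := by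
    intro ω
    rw [Real.norm_eq_abs, abs_of_nonneg (hsNorm_nonneg b _)]
    refine (pointwise_key b hM X Xb ω).trans (le_of_eq ?_)
    simp only [hF, hG1, hG2, Pi.add_apply, Pi.smul_apply, Finset.sum_apply, smul_eq_mul, hd, hs,
      hc, hm]
    ring
  have step1 : eLpNorm (fun ω => hsNorm b (sampleCov X ω - sampleCov Xb ω)) q μ
      ≤ eLpNorm F q μ := eLpNorm_mono_real hpt
  have stepG1 : eLpNorm G1 q μ ≤ (M : ℝ≥0∞) * (D * (A + B)) := by
    have e : G1 = ∑ i, fun ω => d i ω * s i ω := by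
      rw [hG1]; funext ω; simp [Finset.sum_apply]
    rw [e]
    refine (eLpNorm_sum_le (fun i _ => ((hdm i).mul (hsm i)).aestronglyMeasurable) h1q).trans ?_
    calc ∑ i : Fin M, eLpNorm (fun ω => d i ω * s i ω) q μ
        ≤ ∑ _i : Fin M, D * (A + B) := Finset.sum_le_sum fun i _ => hT i i
      _ = (M : ℝ≥0∞) * (D * (A + B)) := by
          simp [Finset.sum_const, nsmul_eq_mul]
  have stepG2 : eLpNorm G2 q μ ≤ (M : ℝ≥0∞) * ((M : ℝ≥0∞) * (D * (A + B))) := by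
    have e : G2 = ∑ ij : Fin M × Fin M, fun ω => d ij.1 ω * s ij.2 ω := by
      rw [hG2]; funext ω; simp [Finset.sum_apply]
    rw [e]
    refine (eLpNorm_sum_le
      (fun ij _ => ((hdm ij.1).mul (hsm ij.2)).aestronglyMeasurable) h1q).trans ?_
    calc ∑ ij : Fin M × Fin M, eLpNorm (fun ω => d ij.1 ω * s ij.2 ω) q μ
        ≤ ∑ _ij : Fin M × Fin M, D * (A + B) := Finset.sum_le_sum fun ij _ => hT ij.1 ij.2
      _ = (M : ℝ≥0∞) * ((M : ℝ≥0∞) * (D * (A + B))) := by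
          simp [Finset.sum_const, nsmul_eq_mul]
          ring
  have stepF : eLpNorm F q μ ≤
      (ENNReal.ofReal (c*m) * ((M:ℝ≥0∞) * (D * (A + B))))
        + ENNReal.ofReal (c*m*m) * ((M:ℝ≥0∞) * ((M:ℝ≥0∞) * (D * (A + B)))) := by
    rw [hF]
    refine (eLpNorm_add_le (hG1m.const_smul _) (hG2m.const_smul _) h1q).trans ?_
    rw [eLpNorm_const_smul, eLpNorm_const_smul]
    rw [Real.enorm_eq_ofReal (by positivity : (0:ℝ) ≤ c * m),
      Real.enorm_eq_ofReal (by positivity : (0:ℝ) ≤ c * m * m)]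
    exact add_le_add (mul_le_mul_right stepG1 _) (mul_le_mul_right stepG2 _)
  -- coefficient arithmetic
  have hMne : ((M:ℝ)) ≠ 0 := by positivity
  have hcoef1 : ENNReal.ofReal (c*m) * (M:ℝ≥0∞) = ENNReal.ofReal c := by
    rw [← ENNReal.ofReal_natCast, ← ENNReal.ofReal_mul (by positivity)]
    congr 1
    field_simp [hm]
    rw [mul_assoc, hm, inv_mul_cancel₀ hMne, mul_one]
  have hcoef2 : ENNReal.ofReal (c*m*m) * ((M:ℝ≥0∞) * (M:ℝ≥0∞)) = ENNReal.ofReal c := by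
    rw [← ENNReal.ofReal_natCast, ← ENNReal.ofReal_mul (by positivity),
      ← ENNReal.ofReal_mul (by positivity)]
    congr 1
    field_simp [hm]
    rw [mul_assoc, ← mul_pow, hm, inv_mul_cancel₀ hMne, one_pow, mul_one]
  have final : (ENNReal.ofReal (c*m) * ((M:ℝ≥0∞) * (D * (A + B))))
        + ENNReal.ofReal (c*m*m) * ((M:ℝ≥0∞) * ((M:ℝ≥0∞) * (D * (A + B))))
      ≤ ENNReal.ofReal (4 * (M : ℝ) / ((M : ℝ) - 1)) * (D * (A + B)) := by
    have e1 : ENNReal.ofReal (c*m) * ((M:ℝ≥0∞) * (D*(A+B)))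
        = ENNReal.ofReal c * (D*(A+B)) := by
      rw [← mul_assoc, hcoef1]
    have e2 : ENNReal.ofReal (c*m*m) * ((M:ℝ≥0∞) * ((M:ℝ≥0∞) * (D*(A+B))))
        = ENNReal.ofReal c * (D*(A+B)) := by
      rw [show (M:ℝ≥0∞) * ((M:ℝ≥0∞) * (D*(A+B))) = ((M:ℝ≥0∞)*(M:ℝ≥0∞)) * (D*(A+B)) by ring,
        ← mul_assoc, hcoef2]
    rw [e1, e2, ← add_mul, ← ENNReal.ofReal_add hc0 hc0]
    refine mul_le_mul_left (ENNReal.ofReal_le_ofReal ?_) _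
    have h4 : 4 * (M:ℝ) / ((M:ℝ) - 1) = 4 * c := by rw [hc]; ring
    rw [h4]
    linarith
  exact step1.trans (stepF.trans final)
end

section
/- Let g(λ, s) = e^{−λs} + (1 − e^{−λs})/λ with λ ≥ λ₁ > 1, let Δt > 0, let T > 0, and let 1 < k with (k−1)·2Δt ≤ T, i.e. k ≤ T/(2Δt) + 1. Then |g(λ, Δt)^{2k} − g(λ, 2Δt)^k| ≤ ((1 + T²)/2) · Δt. -/
open Real

/-- Per-step amplification factor of the exponential Euler scheme. -/
noncomputable def gAmp (lam s : ℝ) : ℝ := Real.exp (-lam * s) + (1 - Real.exp (-lam * s)) / lam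

/-- If `0 ≤ A ≤ b`, then `b^k - A^k ≤ k b^(k-1) (b - A)`. -/
lemma my_pow_sub_pow_le (A b : ℝ) (hA : 0 ≤ A) (hAb : A ≤ b) :
    ∀ k : ℕ, b ^ k - A ^ k ≤ (k : ℝ) * b ^ (k - 1) * (b - A) := by
  intro k
  induction k with
  | zero => simp
  | succ n ih =>
    have hb0 : 0 ≤ b := hA.trans hAb
    rcases n with _ | m
    · simp
    · have hAn : A ^ (m+1) ≤ b ^ (m+1) := pow_le_pow_left₀ hA hAb (m+1)
      have h1 : b * (b ^ (m+1) - A ^ (m+1)) ≤ ((m+1 : ℕ) : ℝ) * b ^ (m+1) * (b - A) := by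
        have h := mul_le_mul_of_nonneg_left ih hb0
        calc b * (b ^ (m+1) - A ^ (m+1))
            ≤ b * (((m+1 : ℕ) : ℝ) * b ^ ((m+1) - 1) * (b - A)) := h
          _ = ((m+1 : ℕ) : ℝ) * (b * b ^ m) * (b - A) := by norm_num; ring
          _ = ((m+1 : ℕ) : ℝ) * b ^ (m+1) * (b - A) := by rw [pow_succ]; ring
      have h2 : A ^ (m+1) * (b - A) ≤ b ^ (m+1) * (b - A) :=
        mul_le_mul_of_nonneg_right hAn (by linarith)
      have key : b ^ (m+2) - A ^ (m+2)
          = b * (b ^ (m+1) - A ^ (m+1)) + A ^ (m+1) * (b - A) := by ring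
      have hfin : ((m+2 : ℕ) : ℝ) * b ^ ((m+2) - 1) * (b - A)
          = ((m+1 : ℕ) : ℝ) * b ^ (m+1) * (b - A) + b ^ (m+1) * (b - A) := by
        norm_num; ring
      calc b ^ (m+2) - A ^ (m+2)
          ≤ ((m+1 : ℕ) : ℝ) * b ^ (m+1) * (b - A) + b ^ (m+1) * (b - A) := by
            rw [key]; exact add_le_add h1 h2
        _ = ((m+2 : ℕ) : ℝ) * b ^ ((m+2) - 1) * (b - A) := hfin.symm

/-- For `k ≥ 2` and `b ∈ [0,1]`, `k b^(k-1) (1-b) ≤ 1/2`. -/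
lemma my_kb_bound (k : ℕ) (hk : 2 ≤ k) (b : ℝ) (hb0 : 0 ≤ b) (hb1 : b ≤ 1) :
    (k : ℝ) * b ^ (k - 1) * (1 - b) ≤ 1 / 2 := by
  rcases Nat.lt_or_ge k 4 with h4 | h4
  · interval_cases k
    · norm_num
      nlinarith [sq_nonneg (b - 1/2)]
    · norm_num
      nlinarith [sq_nonneg (b - 2/3), mul_nonneg hb0 hb0]
  · have ht0 : 0 ≤ 1 - b := by linarith
    have hbe : b ≤ Real.exp (-(1 - b)) := by
      have := Real.add_one_le_exp (-(1 - b)); linarith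
    have hpow : b ^ (k-1) ≤ Real.exp (-(1 - b)) ^ (k-1) := pow_le_pow_left₀ hb0 hbe _
    have hcast : ((k - 1 : ℕ) : ℝ) = (k : ℝ) - 1 := by
      push_cast [Nat.cast_sub (by omega : 1 ≤ k)]; ring
    have hexp_eq : Real.exp (-(1 - b)) ^ (k-1) = Real.exp (-(((k:ℝ) - 1) * (1 - b))) := by
      rw [← Real.exp_nat_mul, hcast]; ring_nf
    have hk4 : (4:ℝ) ≤ (k:ℝ) := by exact_mod_cast h4
    have hy0 : 0 ≤ ((k:ℝ) - 1) * (1 - b) := mul_nonneg (by linarith) ht0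
    have hEpos : 0 < Real.exp (-(((k:ℝ) - 1) * (1 - b))) := Real.exp_pos _
    have hyE : (((k:ℝ) - 1) * (1 - b)) * Real.exp (-(((k:ℝ) - 1) * (1 - b)))
        ≤ Real.exp (-1) := by
      have h := Real.add_one_le_exp ((((k:ℝ) - 1) * (1 - b)) - 1)
      have h1 : (((k:ℝ) - 1) * (1 - b)) ≤ Real.exp ((((k:ℝ) - 1) * (1 - b)) - 1) := by
        linarith
      have h2 := mul_le_mul_of_nonneg_right h1 hEpos.le
      rwa [← Real.exp_add,
        show (((k:ℝ) - 1) * (1 - b)) - 1 + -(((k:ℝ) - 1) * (1 - b)) = -1 by ring] at h2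
    have hE38 : Real.exp (-1) ≤ 3/8 := by
      have h1 : Real.exp (-1) * Real.exp 1 = 1 := by
        rw [← Real.exp_add]; norm_num
      nlinarith [Real.exp_one_gt_d9, Real.exp_pos (-1:ℝ)]
    have step1 : (k : ℝ) * b ^ (k-1) * (1 - b)
        ≤ (k:ℝ) * Real.exp (-(((k:ℝ) - 1) * (1 - b))) * (1 - b) := by
      rw [← hexp_eq]
      nlinarith [hpow, ht0, hk4]
    have step2 : (k:ℝ) * Real.exp (-(((k:ℝ) - 1) * (1 - b))) * (1 - b)
        ≤ (4/3) * ((((k:ℝ) - 1) * (1 - b)) * Real.exp (-(((k:ℝ) - 1) * (1 - b)))) := by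
      nlinarith [mul_nonneg (mul_nonneg hEpos.le ht0) (by linarith : (0:ℝ) ≤ (k:ℝ) - 4)]
    linarith

set_option maxHeartbeats 1600000 in
/-- For `λ ≥ λ₁ > 1`, `Δt > 0`, `T > 0` and `1 < k` with `(k−1)·2Δt ≤ T`:
`|g(λ,Δt)^{2k} − g(λ,2Δt)^k| ≤ ((1 + T²)/2) Δt`. -/
theorem gAmp_pow_diff_bound (lam₁ lam Δt T : ℝ) (hlam₁ : 1 < lam₁) (hlam : lam₁ ≤ lam)
    (hΔt : 0 < Δt) (hT : 0 < T) (k : ℕ) (hk : 1 < k)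
    (hkT : ((k : ℝ) - 1) * (2 * Δt) ≤ T) :
    |gAmp lam Δt ^ (2 * k) - gAmp lam (2 * Δt) ^ k| ≤ (1 + T ^ 2) / 2 * Δt := by
  have hlam1 : 1 < lam := lt_of_lt_of_le hlam₁ hlam
  have hlam0 : 0 < lam := by linarith
  set u : ℝ := Real.exp (-lam * Δt) with hu_def
  have hu0 : 0 < u := Real.exp_pos _
  have hu1 : u < 1 := by
    rw [hu_def, Real.exp_lt_one_iff]
    nlinarith
  have hu2 : Real.exp (-lam * (2 * Δt)) = u ^ 2 := by
    rw [hu_def, sq, ← Real.exp_add]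
    ring_nf
  have huΔt : 1 - u ≤ lam * Δt := by
    have h := Real.add_one_le_exp (-lam * Δt)
    rw [← hu_def] at h
    nlinarith
  set a : ℝ := u + (1 - u) / lam with ha_def
  set b : ℝ := u ^ 2 + (1 - u ^ 2) / lam with hb_def
  set q : ℝ := (1 - u) / lam with hq_def
  have ha_eq : gAmp lam Δt = a := by rw [gAmp]
  have hb_eq : gAmp lam (2 * Δt) = b := by rw [gAmp, hu2]
  have hq0 : 0 ≤ q := div_nonneg (by linarith) hlam0.le
  have hqΔt : q ≤ Δt := by
    rw [hq_def, div_le_iff₀ hlam0]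
    nlinarith
  have hA : a ^ 2 = b - (lam - 1) * q ^ 2 := by
    rw [ha_def, hb_def, hq_def]
    field_simp
    ring
  have haq : a = u + q := rfl
  have hb1 : b ≤ 1 := by
    have h : (1 - u ^ 2) / lam ≤ 1 - u ^ 2 :=
      div_le_self (by nlinarith) hlam1.le
    rw [hb_def]; nlinarith
  have hb0' : 0 ≤ b := by
    rw [hb_def]
    have : 0 ≤ (1 - u ^ 2) / lam := div_nonneg (by nlinarith) hlam0.le
    nlinarith
  have hrw : 1 - b - (lam - 1) * q = (lam - 1) * (1 - u) * u / lam := by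
    rw [hb_def, hq_def]; field_simp; ring
  have hpos : 0 ≤ (lam - 1) * (1 - u) * u / lam :=
    div_nonneg (mul_nonneg (mul_nonneg (by linarith) (by linarith)) hu0.le) hlam0.le
  clear_value u a b q
  clear hu_def ha_def hb_def hq_def hu2 huΔt
  rw [ha_eq, hb_eq]
  have ha0 : 0 ≤ a := by rw [haq]; linarith
  have hab : a ^ 2 ≤ b := by nlinarith [sq_nonneg q]
  have h1b : (lam - 1) * q ≤ 1 - b := by linarith
  have hkey : (lam - 1) * q ^ 2 ≤ (1 - b) * Δt := by
    have h1 : (lam - 1) * q ^ 2 ≤ ((lam - 1) * q) * Δt := by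
      have he : (lam - 1) * q ^ 2 = ((lam - 1) * q) * q := by ring
      rw [he]
      exact mul_le_mul_of_nonneg_left hqΔt (mul_nonneg (by linarith) hq0)
    have h2 : ((lam - 1) * q) * Δt ≤ (1 - b) * Δt :=
      mul_le_mul_of_nonneg_right h1b hΔt.le
    linarith
  have hk2 : 2 ≤ k := hk
  have habs : |a ^ (2 * k) - b ^ k| = b ^ k - (a ^ 2) ^ k := by
    rw [pow_mul, abs_sub_comm, abs_of_nonneg]
    exact sub_nonneg.2 (pow_le_pow_left₀ (sq_nonneg a) hab k)
  rw [habs]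
  have hbk : 0 ≤ (k : ℝ) * b ^ (k - 1) := mul_nonneg (Nat.cast_nonneg k) (pow_nonneg hb0' _)
  calc b ^ k - (a ^ 2) ^ k
      ≤ (k : ℝ) * b ^ (k - 1) * (b - a ^ 2) :=
        my_pow_sub_pow_le (a ^ 2) b (sq_nonneg a) hab k
    _ = (k : ℝ) * b ^ (k - 1) * ((lam - 1) * q ^ 2) := by rw [hA]; ring
    _ ≤ (k : ℝ) * b ^ (k - 1) * ((1 - b) * Δt) :=
        mul_le_mul_of_nonneg_left hkey hbk
    _ = ((k : ℝ) * b ^ (k - 1) * (1 - b)) * Δt := by ring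
    _ ≤ (1 / 2) * Δt :=
        mul_le_mul_of_nonneg_right (my_kb_bound k hk2 b hb0' hb1) hΔt.le
    _ ≤ (1 + T ^ 2) / 2 * Δt := by nlinarith [mul_nonneg (sq_nonneg T) hΔt.le]
end
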